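/- Let ψ(t) = (1/2)(1−√t)² log((1−√t)²) + (1/2)(1+√t)² log((1+√t)²) − (1+t) log(1+t). Then for every t ∈ (0,1), −2·ψ''(t) ≥ ψ'(t), where ψ' and ψ'' denote the first and second derivatives of ψ. -/

import Mathlib

/-- `ψ(t) = (1/2)(1−√t)² log((1−√t)²) + (1/2)(1+√t)² log((1+√t)²) − (1+t) log(1+t)`
(note `Real.log 0 = 0`). -/
noncomputable def psi (t : ℝ) : ℝ :=
  (1 / 2) * (1 - Real.sqrt t) ^ 2 * Real.log ((1 - Real.sqrt t) ^ 2) +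
    (1 / 2) * (1 + Real.sqrt t) ^ 2 * Real.log ((1 + Real.sqrt t) ^ 2) -
    (1 + t) * Real.log (1 + t)

/-- Explicit first derivative of `psi` on `(0,1)`. -/
noncomputable def psiD1 (t : ℝ) : ℝ :=
  ((1 + Real.sqrt t) * Real.log (1 + Real.sqrt t)
      - (1 - Real.sqrt t) * Real.log (1 - Real.sqrt t)) / Real.sqrt t
    - Real.log (1 + t)

/-- Explicit second derivative of `psi` on `(0,1)`. -/
noncomputable def psiD2 (t : ℝ) : ℝ :=
  (Real.log (1 - Real.sqrt t) + Real.log (1 + Real.sqrt t) + 2) / (2 * t)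
    - ((1 + Real.sqrt t) * Real.log (1 + Real.sqrt t)
        - (1 - Real.sqrt t) * Real.log (1 - Real.sqrt t)) / (2 * t * Real.sqrt t)
    - 1 / (1 + t)

lemma key_log {x : ℝ} (hx0 : 0 ≤ x) (hx1 : x < 1) :
    2 * x ≤ Real.log (1 + x) - Real.log (1 - x) := by
  set f : ℝ → ℝ := fun y => Real.log (1 + y) - Real.log (1 - y) - 2 * y with hf
  have hder : ∀ y ∈ Set.Ico (0:ℝ) 1,
      HasDerivAt f (1 / (1 + y) + 1 / (1 - y) - 2) y := by
    intro y hy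
    have hy1 : (1 : ℝ) + y ≠ 0 := by have := hy.1; linarith
    have hy2 : (1 : ℝ) - y ≠ 0 := by have := hy.2; intro h; linarith [hy.2]
    have h1 : HasDerivAt (fun y : ℝ => Real.log (1 + y)) (1 / (1 + y)) y := by
      have := ((hasDerivAt_const y (1:ℝ)).add (hasDerivAt_id y)).log hy1
      simpa using this
    have h2 : HasDerivAt (fun y : ℝ => Real.log (1 - y)) (-1 / (1 - y)) y := by
      have := ((hasDerivAt_const y (1:ℝ)).sub (hasDerivAt_id y)).log hy2
      simpa using this
    have h3 : HasDerivAt (fun y : ℝ => 2 * y) 2 y := by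
      simpa using (hasDerivAt_id y).const_mul (2:ℝ)
    have := (h1.sub h2).sub h3
    refine this.congr_deriv ?_
    field_simp
    ring
  have hmono : MonotoneOn f (Set.Ico (0:ℝ) 1) := by
    apply monotoneOn_of_deriv_nonneg (convex_Ico 0 1)
    · exact fun y hy => ((hder y hy).continuousAt).continuousWithinAt
    · intro y hy
      rw [interior_Ico] at hy
      exact (hder y ⟨hy.1.le, hy.2⟩).differentiableAt.differentiableWithinAt
    · intro y hy
      rw [interior_Ico] at hy
      rw [(hder y ⟨hy.1.le, hy.2⟩).deriv]
      have hy1 : (0:ℝ) < 1 + y := by linarith [hy.1]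
      have hy2 : (0:ℝ) < 1 - y := by linarith [hy.2]
      have : 1 / (1 + y) + 1 / (1 - y) - 2 = 2 * y ^ 2 / ((1 + y) * (1 - y)) := by
        field_simp; ring
      rw [this]; positivity
  have h0 : f 0 ≤ f x := hmono ⟨le_refl 0, one_pos⟩ ⟨hx0, hx1⟩ hx0
  have hf0 : f 0 = 0 := by simp [hf]
  rw [hf0] at h0
  simp only [hf] at h0
  linarith

lemma psi_hasDeriv1 {t : ℝ} (ht : t ∈ Set.Ioo (0:ℝ) 1) :
    HasDerivAt psi (psiD1 t) t := by
  obtain ⟨ht0, ht1⟩ := ht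
  set s := Real.sqrt t with hsdef
  have hts : s ^ 2 = t := Real.sq_sqrt ht0.le
  have hs0 : 0 < s := Real.sqrt_pos.mpr ht0
  have hs1 : s < 1 := by nlinarith
  have hu : (1:ℝ) - s ≠ 0 := by linarith
  have hv : (1:ℝ) + s ≠ 0 := by linarith
  have htt : (1:ℝ) + t ≠ 0 := by linarith
  have hsq : HasDerivAt Real.sqrt (1 / (2 * s)) t := Real.hasDerivAt_sqrt ht0.ne'
  have hU : HasDerivAt (fun x : ℝ => 1 - Real.sqrt x) (-(1 / (2 * s))) t := by
    exact ((hasDerivAt_const t (1:ℝ)).sub hsq).congr_deriv (by ring)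
  have hV : HasDerivAt (fun x : ℝ => 1 + Real.sqrt x) (1 / (2 * s)) t := by
    exact ((hasDerivAt_const t (1:ℝ)).add hsq).congr_deriv (by ring)
  have hU2 : HasDerivAt (fun x : ℝ => (1 - Real.sqrt x) ^ 2)
      ((2:ℕ) * (1 - s) ^ 1 * (-(1 / (2 * s)))) t := hU.pow 2
  have hV2 : HasDerivAt (fun x : ℝ => (1 + Real.sqrt x) ^ 2)
      ((2:ℕ) * (1 + s) ^ 1 * (1 / (2 * s))) t := hV.pow 2
  have hLU : HasDerivAt (fun x : ℝ => Real.log (1 - Real.sqrt x))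
      ((-(1 / (2 * s))) / (1 - s)) t := hU.log hu
  have hLV : HasDerivAt (fun x : ℝ => Real.log (1 + Real.sqrt x))
      ((1 / (2 * s)) / (1 + s)) t := hV.log hv
  have hT3 : HasDerivAt (fun x : ℝ => (1 + x) * Real.log (1 + x))
      (1 * Real.log (1 + t) + (1 + t) * (1 / (1 + t))) t := by
    have hA : HasDerivAt (fun x : ℝ => 1 + x) 1 t := by
      exact ((hasDerivAt_const t (1:ℝ)).add (hasDerivAt_id t)).congr_deriv (by ring)
    exact hA.mul (hA.log htt)
  have hPhi : HasDerivAt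
      (fun x : ℝ => (1 - Real.sqrt x) ^ 2 * Real.log (1 - Real.sqrt x)
        + (1 + Real.sqrt x) ^ 2 * Real.log (1 + Real.sqrt x)
        - (1 + x) * Real.log (1 + x))
      (psiD1 t) t := by
    have := ((hU2.mul hLU).add (hV2.mul hLV)).sub hT3
    refine this.congr_deriv ?_
    unfold psiD1
    rw [← hsdef]
    field_simp
    ring
  have hpsi : psi = fun x : ℝ =>
      (1 - Real.sqrt x) ^ 2 * Real.log (1 - Real.sqrt x)
        + (1 + Real.sqrt x) ^ 2 * Real.log (1 + Real.sqrt x)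
        - (1 + x) * Real.log (1 + x) := by
    funext x
    unfold psi
    rw [Real.log_pow, Real.log_pow]
    push_cast
    ring
  rw [hpsi]
  exact hPhi

lemma psi_hasDeriv2 {t : ℝ} (ht : t ∈ Set.Ioo (0:ℝ) 1) :
    HasDerivAt psiD1 (psiD2 t) t := by
  obtain ⟨ht0, ht1⟩ := ht
  set s := Real.sqrt t with hsdef
  have hts : s ^ 2 = t := Real.sq_sqrt ht0.le
  have hs0 : 0 < s := Real.sqrt_pos.mpr ht0
  have hs1 : s < 1 := by nlinarith
  have hu : (1:ℝ) - s ≠ 0 := by linarith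
  have hv : (1:ℝ) + s ≠ 0 := by linarith
  have htt : (1:ℝ) + t ≠ 0 := by linarith
  have hsq : HasDerivAt Real.sqrt (1 / (2 * s)) t := Real.hasDerivAt_sqrt ht0.ne'
  have hU : HasDerivAt (fun x : ℝ => 1 - Real.sqrt x) (-(1 / (2 * s))) t := by
    exact ((hasDerivAt_const t (1:ℝ)).sub hsq).congr_deriv (by ring)
  have hV : HasDerivAt (fun x : ℝ => 1 + Real.sqrt x) (1 / (2 * s)) t := by
    exact ((hasDerivAt_const t (1:ℝ)).add hsq).congr_deriv (by ring)
  have hLU : HasDerivAt (fun x : ℝ => Real.log (1 - Real.sqrt x))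
      ((-(1 / (2 * s))) / (1 - s)) t := hU.log hu
  have hLV : HasDerivAt (fun x : ℝ => Real.log (1 + Real.sqrt x))
      ((1 / (2 * s)) / (1 + s)) t := hV.log hv
  have hN : HasDerivAt
      (fun x : ℝ => (1 + Real.sqrt x) * Real.log (1 + Real.sqrt x)
        - (1 - Real.sqrt x) * Real.log (1 - Real.sqrt x))
      ((1 / (2 * s)) * Real.log (1 + s) + (1 + s) * ((1 / (2 * s)) / (1 + s))
        - ((-(1 / (2 * s))) * Real.log (1 - s) + (1 - s) * ((-(1 / (2 * s))) / (1 - s)))) t :=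
    (hV.mul hLV).sub (hU.mul hLU)
  have hQ : HasDerivAt
      (fun x : ℝ => ((1 + Real.sqrt x) * Real.log (1 + Real.sqrt x)
        - (1 - Real.sqrt x) * Real.log (1 - Real.sqrt x)) / Real.sqrt x)
      ((((1 / (2 * s)) * Real.log (1 + s) + (1 + s) * ((1 / (2 * s)) / (1 + s))
        - ((-(1 / (2 * s))) * Real.log (1 - s) + (1 - s) * ((-(1 / (2 * s))) / (1 - s)))) * s
        - ((1 + s) * Real.log (1 + s) - (1 - s) * Real.log (1 - s)) * (1 / (2 * s))) / s ^ 2)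
      t := hN.div hsq hs0.ne'
  have hL : HasDerivAt (fun x : ℝ => Real.log (1 + x)) (1 / (1 + t)) t := by
    have hA : HasDerivAt (fun x : ℝ => 1 + x) 1 t := by
      exact ((hasDerivAt_const t (1:ℝ)).add (hasDerivAt_id t)).congr_deriv (by ring)
    simpa using hA.log htt
  have := hQ.sub hL
  have heq : HasDerivAt psiD1 _ t := this
  convert heq using 1
  unfold psiD2
  rw [← hsdef, ← hts]
  have hss : s ≠ 0 := hs0.ne'
  field_simp
  ring

/-- For every `t ∈ (0,1)`, `−2·ψ''(t) ≥ ψ'(t)`. -/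
theorem neg_two_psi_second_deriv_ge :
    ∀ t ∈ Set.Ioo (0 : ℝ) 1, -2 * deriv (deriv psi) t ≥ deriv psi t := by
  intro t ht
  obtain ⟨ht0, ht1⟩ := ht
  have hderiv1 : ∀ x ∈ Set.Ioo (0:ℝ) 1, deriv psi x = psiD1 x :=
    fun x hx => (psi_hasDeriv1 hx).deriv
  have hev : deriv psi =ᶠ[nhds t] psiD1 :=
    Filter.eventuallyEq_of_mem (isOpen_Ioo.mem_nhds ⟨ht0, ht1⟩) hderiv1
  have h2 : deriv (deriv psi) t = psiD2 t := by
    rw [hev.deriv_eq]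
    exact (psi_hasDeriv2 ⟨ht0, ht1⟩).deriv
  rw [h2, hderiv1 t ⟨ht0, ht1⟩]
  -- now prove the inequality for the explicit formulas
  set s := Real.sqrt t with hsdef
  have hts : s ^ 2 = t := Real.sq_sqrt ht0.le
  have hs0 : 0 < s := Real.sqrt_pos.mpr ht0
  have hs1 : s < 1 := by nlinarith
  have hu : (0:ℝ) < 1 - s := by linarith
  have hv : (0:ℝ) < 1 + s := by linarith
  have htt : (0:ℝ) < 1 + t := by linarith
  set Lu := Real.log (1 - s) with hLu
  set Lv := Real.log (1 + s) with hLv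
  set Lq := Real.log (1 + t) with hLq
  have hL1 : 2 * s ≤ Lv - Lu := key_log hs0.le hs1
  have hL2 : 2 * t ≤ Lq - (Lu + Lv) := by
    have h := key_log ht0.le ht1
    have hfac : (1:ℝ) - t = (1 - s) * (1 + s) := by nlinarith
    rw [hfac, Real.log_mul hu.ne' hv.ne'] at h
    linarith
  have hpos : 0 < t * s * (1 + t) := by positivity
  rw [ge_iff_le, ← sub_nonneg]
  have hEq : (-2 * psiD2 t - psiD1 t) * (t * s * (1 + t)) =
      (1 - t) * (Lv - Lu) * (1 + t) + t * s * (Lq - (Lu + Lv)) * (1 + t) - 2 * s := by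
    unfold psiD1 psiD2
    rw [← hsdef, ← hLu, ← hLv, ← hLq, ← hts]
    field_simp
    ring
  have hRHS : 0 ≤ (1 - t) * (Lv - Lu) * (1 + t) + t * s * (Lq - (Lu + Lv)) * (1 + t) - 2 * s := by
    nlinarith [mul_le_mul_of_nonneg_left hL1 (by nlinarith : (0:ℝ) ≤ (1 - t) * (1 + t)),
      mul_le_mul_of_nonneg_left hL2 (by positivity : (0:ℝ) ≤ t * s * (1 + t)),
      mul_pos (mul_pos ht0 ht0) (mul_pos ht0 hs0)]
  by_contra hcon
  push_neg at hcon
  nlinarith [mul_pos hpos (by linarith : (0:ℝ) < -(-2 * psiD2 t - psiD1 t))]
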